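/- For every string S ∈ Σ^n \ H_{n,k}, there exists a finite set Δ ⊆ P(S) such that the intervals R_{S,i} for i ∈ Δ are pairwise disjoint and P(S) ⊆ ∪_{i∈Δ} R_{S,i}; in particular, Σ_{i∈Δ} |R_{S,i}| ≥ |P(S)|. -/

import Mathlib

open Finset
open scoped Classical

noncomputable section

variable {α : Type*}

/-- `i ↻ n`: 1-indexed wrap-around of an (integer) position. -/
def zwrap (n : ℕ) (i : ℤ) : ℕ := ((i - 1) % (n : ℤ)).toNat + 1

/-- `S*[i]`: the infinite cyclic extension of the length-`n` string `S` (1-indexed). -/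
def cext (n : ℕ) (S : ℕ → α) (i : ℕ) : α := S ((i - 1) % n + 1)

/-- The fragment `S*[a..]`, i.e. the string `w` with `w[j] = S*[a+j-1]`. -/
def frag (n : ℕ) (S : ℕ → α) (a : ℕ) : ℕ → α := fun j => cext n S (a + j - 1)

/-- Hamming distance restricted to positions `[a..b]` (1-indexed strings). -/
def hamIcc (a b : ℕ) (S T : ℕ → α) : ℕ := ((Finset.Icc a b).filter fun j => S j ≠ T j).card

/-- Hamming distance between two length-`n` strings. -/
def ham (n : ℕ) (S T : ℕ → α) : ℕ := hamIcc 1 n S T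

/-- `p` is a period of the length-`L` string `w` (1-indexed). -/
def IsPeriod (L : ℕ) (w : ℕ → α) (p : ℕ) : Prop :=
  1 ≤ p ∧ ∀ j, 1 ≤ j → j + p ≤ L → w j = w (j + p)

/-- `per(w)`: the shortest period of the length-`L` string `w`. -/
def per (L : ℕ) (w : ℕ → α) : ℕ := sInf {p | IsPeriod L w p}

/-- `root(S)`: the length of the primitive root of the length-`n` string `S`,
i.e. the least length of a string `Q` with `S = Q^α`. -/
def root (n : ℕ) (S : ℕ → α) : ℕ := sInf {r | r ∣ n ∧ IsPeriod n S r}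

/-- `S` is `(a,b)`-pseudo-periodic: it has an `(a,b)`-base. -/
def PseudoPeriodic (n : ℕ) (a b : ℝ) (S : ℕ → α) : Prop :=
  ∃ S' : ℕ → α, (root n S' : ℝ) ≤ (n : ℝ) / a ∧ (ham n S S' : ℝ) ≤ b

/-- `cyc(S)`: left cyclic rotation, `cyc(S)[i] = S*[i+1]`. -/
def cyc (n : ℕ) (S : ℕ → α) : ℕ → α := fun i => cext n S (i + 1)

/-- `cyc^m(S)` for an integer `m`: `cyc^m(S)[i] = S*[i+m]` (cyclically). -/
def cycZ (n : ℕ) (m : ℤ) (S : ℕ → α) : ℕ → α := fun i => S (zwrap n ((i : ℤ) + m))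

/-- `rot_n(P) = {(i-1) ↻ n : i ∈ P}`. -/
def rotSet (n : ℕ) (P : Finset ℕ) : Finset ℕ := P.image fun i => zwrap n ((i : ℤ) - 1)

/-- `ρ_{S,i} = per(S*[i..i+3ℓ-1])`. -/
def rho (n ℓ : ℕ) (S : ℕ → α) (i : ℕ) : ℕ := per (3 * ℓ) (frag n S i)

/-- `μ_{S,i}*`: the infinite periodic extension of `μ_{S,i} = S*[i..i+ρ_{S,i}-1]` (1-indexed). -/
def muExt (n ℓ : ℕ) (S : ℕ → α) (i : ℕ) : ℕ → α :=
  fun j => cext n S (i + (j - 1) % rho n ℓ S i)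

/-- `P(S)`: the set of cubic positions of `S`. -/
def cubicSet (n ℓ : ℕ) (S : ℕ → α) : Finset ℕ :=
  (Finset.Icc 1 n).filter fun i => rho n ℓ S i ≤ ℓ

/-- The defining set of `τ_{S,i}`:
`{τ ≥ 1 : τ < (n/(γk))·Ham(S*[i..i+τ-1], μ_{S,i}*[1..τ])}`. -/
def tauSet (n ℓ k : ℕ) (γ : ℝ) (S : ℕ → α) (i : ℕ) : Set ℕ :=
  {τ | 1 ≤ τ ∧ (τ : ℝ) < (n : ℝ) / (γ * k) * (hamIcc 1 τ (frag n S i) (muExt n ℓ S i) : ℝ)}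

/-- `τ_{S,i}`. -/
def tau (n ℓ k : ℕ) (γ : ℝ) (S : ℕ → α) (i : ℕ) : ℕ := sInf (tauSet n ℓ k γ S i)

/-- `R_{S,i} = [i..i+τ_{S,i}-1]`. -/
def Rset (n ℓ k : ℕ) (γ : ℝ) (S : ℕ → α) (i : ℕ) : Finset ℕ :=
  Finset.Icc i (i + tau n ℓ k γ S i - 1)

/-- `M_{S,i} = {j ∈ R_{S,i} : S*[j] ≠ μ_{S,i}*[j-i+1]}`. -/
def Mset (n ℓ k : ℕ) (γ : ℝ) (S : ℕ → α) (i : ℕ) : Finset ℕ :=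
  (Rset n ℓ k γ S i).filter fun j => cext n S j ≠ muExt n ℓ S i (j - i + 1)

/-- `A_{S,i} = {j ∈ R_{S,i} : [j..j+2ℓ-1] ⊆ R_{S,i} \ M_{S,i}}`. -/
def Aset (n ℓ k : ℕ) (γ : ℝ) (S : ℕ → α) (i : ℕ) : Finset ℕ :=
  (Rset n ℓ k γ S i).filter fun j =>
    Finset.Icc j (j + 2 * ℓ - 1) ⊆ Rset n ℓ k γ S i \ Mset n ℓ k γ S i

/-- `f_c(S) = ∪_{i ∈ P(S)} {j ↻ n : j ∈ M_{S,i}}`. -/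
def fc (n ℓ k : ℕ) (γ : ℝ) (S : ℕ → α) : Finset ℕ :=
  (cubicSet n ℓ S).biUnion fun i => (Mset n ℓ k γ S i).image fun j => zwrap n (j : ℤ)

private lemma cext_congr (n : ℕ) (S : ℕ → α) {a b : ℕ} (h : (a-1) % n = (b-1) % n) :
    cext n S a = cext n S b := by unfold cext; rw [h]

private lemma tauSet_nonempty (n k ℓ : ℕ) (γ : ℝ)
    (hk1 : 1 ≤ k) (hkn : k ≤ n) (hγ : 14 ≤ γ) (hℓ1 : 1 ≤ ℓ)
    (hn : (n : ℝ) = 3 * γ * k * ℓ)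
    (S : ℕ → α) (hS : ¬ PseudoPeriodic n (3 * γ * k) (γ * k) S)
    {i : ℕ} (hi : i ∈ cubicSet n ℓ S) : (tauSet n ℓ k γ S i).Nonempty := by
  rw [cubicSet, Finset.mem_filter, Finset.mem_Icc] at hi
  obtain ⟨⟨hi1, hin⟩, hρℓ⟩ := hi
  set ρ := rho n ℓ S i with hρ
  have hn1 : 1 ≤ n := le_trans hk1 hkn
  have hk1' : (1:ℝ) ≤ (k:ℝ) := by exact_mod_cast hk1
  have hγk : (0:ℝ) < γ * k := by nlinarith
  -- ρ ≥ 1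
  have hρ1 : 1 ≤ ρ := by
    have hmem : (3*ℓ) ∈ {p | IsPeriod (3*ℓ) (frag n S i) p} :=
      ⟨by omega, fun j hj hle => absurd hle (by omega)⟩
    have h2 : IsPeriod (3*ℓ) (frag n S i) (sInf {p | IsPeriod (3*ℓ) (frag n S i) p}) := by
      exact Nat.sInf_mem ⟨3*ℓ, hmem⟩
    exact h2.1
  by_contra hcon
  have hA0 : ∀ τ : ℕ, ¬ (1 ≤ τ ∧ (τ:ℝ) < (n:ℝ)/(γ*k) * (hamIcc 1 τ (frag n S i) (muExt n ℓ S i) : ℝ)) :=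
    fun τ h => hcon ⟨τ, h⟩
  have hdiv : (n:ℝ)/(γ*k) = 3*(ℓ:ℝ) := by
    rw [hn, div_eq_iff (ne_of_gt hγk)]; ring
  have hA : ∀ b : ℕ, 3 * ℓ * hamIcc 1 b (frag n S i) (muExt n ℓ S i) ≤ b := by
    intro b
    rcases Nat.eq_zero_or_pos b with rfl | hb
    · simp [hamIcc]
    · have h := hA0 b
      have h2 : ¬ ((b:ℝ) < (n:ℝ)/(γ*k) * (hamIcc 1 b (frag n S i) (muExt n ℓ S i) : ℝ)) :=
        fun hlt => h ⟨hb, hlt⟩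
      rw [not_lt, hdiv] at h2
      exact_mod_cast h2
  -- congruence mod ρ for muExt
  have Mcongr : ∀ a b : ℕ, (a-1) % ρ = (b-1) % ρ → muExt n ℓ S i a = muExt n ℓ S i b := by
    intro a b h
    simp only [muExt]
    rw [← hρ, h]
  -- frag is n-periodic
  have Fshift : ∀ j, 1 ≤ j → frag n S i (j + n) = frag n S i j := by
    intro j hj
    show cext n S (i + (j + n) - 1) = cext n S (i + j - 1)
    exact cext_congr n S
      (by rw [show i + (j+n) - 1 - 1 = (i + j - 1 - 1) + n from by omega, Nat.add_mod_right])
  -- KEY: muExt is n-shift invariant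
  have Mn1 : ∀ j, 1 ≤ j → muExt n ℓ S i (j + n) = muExt n ℓ S i j := by
    by_contra hcontra
    push_neg at hcontra
    obtain ⟨j0, hj01, hj0ne⟩ := hcontra
    set r := (j0 - 1) % ρ + 1 with hr
    have hrρ : r ≤ ρ := by
      have := Nat.mod_lt (j0-1) (show 0 < ρ by omega); omega
    set T := 2*n+1 with hT
    set N := T*ρ + n with hN
    have hB : ∀ t, t < T → ∃ x, x ∈ Finset.Icc 1 N ∧
        (frag n S i x ≠ muExt n ℓ S i x) ∧ (x = r + t*ρ ∨ x = r + t*ρ + n) := by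
      intro t ht
      have hbound : r + t*ρ ≤ T*ρ := by
        have h3 : (t+1)*ρ ≤ T*ρ := Nat.mul_le_mul (by omega) le_rfl
        have h4 : (t+1)*ρ = t*ρ + ρ := by ring
        omega
      have hM1 : muExt n ℓ S i (r + t*ρ) = muExt n ℓ S i j0 := Mcongr _ _ (by
        rw [show r + t*ρ - 1 = (j0-1)%ρ + t*ρ from by omega, Nat.add_mul_mod_self_right,
          Nat.mod_mod_of_dvd _ dvd_rfl])
      have hM2 : muExt n ℓ S i (r + t*ρ + n) = muExt n ℓ S i (j0 + n) := Mcongr _ _ (by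
        rw [show r + t*ρ + n - 1 = ((j0-1)%ρ + n) + t*ρ from by omega,
          Nat.add_mul_mod_self_right,
          show j0 + n - 1 = (j0 - 1) + n from by omega,
          Nat.add_mod ((j0-1)%ρ) n, Nat.mod_mod_of_dvd _ dvd_rfl, ← Nat.add_mod])
      have hF1 : frag n S i (r + t*ρ + n) = frag n S i (r + t*ρ) := Fshift _ (by omega)
      by_cases hc : frag n S i (r + t*ρ) ≠ muExt n ℓ S i (r + t*ρ)
      · exact ⟨r + t*ρ, Finset.mem_Icc.mpr ⟨by omega, by omega⟩, hc, Or.inl rfl⟩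
      · push_neg at hc
        refine ⟨r + t*ρ + n, Finset.mem_Icc.mpr ⟨by omega, by omega⟩, ?_, Or.inr rfl⟩
        intro heq
        apply hj0ne
        calc muExt n ℓ S i (j0 + n) = muExt n ℓ S i (r + t*ρ + n) := hM2.symm
          _ = frag n S i (r + t*ρ + n) := heq.symm
          _ = frag n S i (r + t*ρ) := hF1
          _ = muExt n ℓ S i (r + t*ρ) := hc
          _ = muExt n ℓ S i j0 := hM1
    have hB' : ∀ t, ∃ x, t < T → (x ∈ Finset.Icc 1 N ∧
        (frag n S i x ≠ muExt n ℓ S i x) ∧ (x = r + t*ρ ∨ x = r + t*ρ + n)) := by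
      intro t
      by_cases h : t < T
      · obtain ⟨x, hx⟩ := hB t h; exact ⟨x, fun _ => hx⟩
      · exact ⟨0, fun h' => absurd h' h⟩
    choose g hg using hB'
    set B := (Finset.Icc 1 N).filter (fun x => frag n S i x ≠ muExt n ℓ S i x) with hBdef
    have hmaps : ∀ t ∈ Finset.range T, g t ∈ B := by
      intro t ht
      have h := hg t (Finset.mem_range.mp ht)
      rw [hBdef, Finset.mem_filter]
      exact ⟨h.1, h.2.1⟩
    have hcard := Finset.card_eq_sum_card_fiberwise hmaps
    have hfiber : ∀ b ∈ B, ((Finset.range T).filter (fun t => g t = b)).card ≤ 2 := by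
      intro b _
      have hsub : (Finset.range T).filter (fun t => g t = b) ⊆ {(b - r)/ρ, (b - r - n)/ρ} := by
        intro t ht
        rw [Finset.mem_filter, Finset.mem_range] at ht
        obtain ⟨ht, hgt⟩ := ht
        have h := (hg t ht).2.2
        rw [hgt] at h
        rcases h with h | h
        · have ht' : t = (b - r)/ρ := by
            rw [h, show r + t*ρ - r = t*ρ from by omega,
              Nat.mul_div_cancel _ (show 0 < ρ by omega)]
          simp [ht']
        · have ht' : t = (b - r - n)/ρ := by
            rw [h, show r + t*ρ + n - r - n = t*ρ from by omega,
              Nat.mul_div_cancel _ (show 0 < ρ by omega)]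
          simp [ht']
      calc ((Finset.range T).filter (fun t => g t = b)).card
          ≤ ({(b-r)/ρ, (b-r-n)/ρ} : Finset ℕ).card := Finset.card_le_card hsub
        _ ≤ 2 := by
            apply le_trans (Finset.card_insert_le _ _); simp
    have hTle : T ≤ 2 * B.card := by
      have h2 : (Finset.range T).card ≤ ∑ _b ∈ B, 2 := by
        rw [hcard]; exact Finset.sum_le_sum hfiber
      rw [Finset.card_range, Finset.sum_const, smul_eq_mul] at h2
      omega
    have hAB : 3*ℓ*B.card ≤ N := hA N
    have h1 : T*ρ ≤ T*ℓ := Nat.mul_le_mul le_rfl hρℓ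
    have p1 : ℓ * T ≤ 2*(ℓ*B.card) := by
      calc ℓ*T ≤ ℓ*(2*B.card) := Nat.mul_le_mul le_rfl hTle
        _ = 2*(ℓ*B.card) := by ring
    have p2 : 3*(ℓ*B.card) ≤ T*ℓ + n := by
      calc 3*(ℓ*B.card) = 3*ℓ*B.card := by ring
        _ ≤ N := hAB
        _ = T*ρ + n := hN
        _ ≤ T*ℓ + n := Nat.add_le_add_right h1 n
    have p3 : 3*(ℓ*T) ≤ 2*(T*ℓ) + 2*n := by
      calc 3*(ℓ*T) ≤ 3*(2*(ℓ*B.card)) := Nat.mul_le_mul le_rfl p1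
        _ = 2*(3*(ℓ*B.card)) := by ring
        _ ≤ 2*(T*ℓ + n) := Nat.mul_le_mul le_rfl p2
        _ = 2*(T*ℓ) + 2*n := by ring
    have h6 : ℓ*T ≤ 2*n := by linarith [p3]
    have h7 : T ≤ ℓ*T := Nat.le_mul_of_pos_left T (by omega)
    have h8 : T ≤ 2*n := h7.trans h6
    omega
  -- gcd shift invariance machinery
  have Inv_mul : ∀ d, (∀ a, 1 ≤ a → muExt n ℓ S i (a + d) = muExt n ℓ S i a) →
      ∀ t a, 1 ≤ a → muExt n ℓ S i (a + t*d) = muExt n ℓ S i a := by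
    intro d hd t
    induction t with
    | zero => simp
    | succ t iht =>
      intro a ha
      rw [show a + (t+1)*d = (a + t*d) + d from by ring, hd _ (by omega), iht a ha]
  have Invρ : ∀ a, 1 ≤ a → muExt n ℓ S i (a + ρ) = muExt n ℓ S i a := by
    intro a ha
    exact Mcongr _ _ (by
      rw [show a + ρ - 1 = (a-1) + 1*ρ from by omega, Nat.add_mul_mod_self_right])
  have Invgcd : ∀ d : ℕ, ∀ e,
      (∀ a, 1 ≤ a → muExt n ℓ S i (a + d) = muExt n ℓ S i a) →
      (∀ a, 1 ≤ a → muExt n ℓ S i (a + e) = muExt n ℓ S i a) →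
      (∀ a, 1 ≤ a → muExt n ℓ S i (a + Nat.gcd d e) = muExt n ℓ S i a) := by
    intro d
    induction d using Nat.strong_induction_on with
    | _ d ih =>
      intro e hd he
      rcases Nat.eq_zero_or_pos d with rfl | hd0
      · simpa using he
      · rw [Nat.gcd_rec d e]
        refine ih (e % d) (Nat.mod_lt e hd0) d ?_ hd
        intro a ha
        have h1' : (a + e % d) + (e/d)*d = a + e := by
          rw [add_assoc, Nat.mod_add_div']
        calc muExt n ℓ S i (a + e % d)
            = muExt n ℓ S i ((a + e % d) + (e/d)*d) := (Inv_mul d hd (e/d) _ (by omega)).symm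
          _ = muExt n ℓ S i (a + e) := by rw [h1']
          _ = muExt n ℓ S i a := he a ha
  set gg := Nat.gcd ρ n with hgdef
  have hg1 : 1 ≤ gg := Nat.gcd_pos_of_pos_left _ (by omega)
  have hgn : gg ∣ n := Nat.gcd_dvd_right ρ n
  have hgℓ : gg ≤ ℓ := le_trans (Nat.le_of_dvd (by omega) (Nat.gcd_dvd_left ρ n)) hρℓ
  have Invg : ∀ a, 1 ≤ a → muExt n ℓ S i (a + gg) = muExt n ℓ S i a := by
    rw [hgdef]; exact Invgcd ρ n Invρ Mn1
  have Mg : ∀ a b, 1 ≤ a → 1 ≤ b → (a-1) % gg = (b-1) % gg →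
      muExt n ℓ S i a = muExt n ℓ S i b := by
    have key : ∀ c, 1 ≤ c → muExt n ℓ S i c = muExt n ℓ S i (1 + (c-1) % gg) := by
      intro c hc
      have h1 : (1 + (c-1) % gg) + ((c-1)/gg)*gg = c := by
        rw [add_assoc, Nat.mod_add_div']; omega
      conv_lhs => rw [← h1]
      exact Inv_mul gg Invg ((c-1)/gg) _ (by omega)
    intro a b ha hb hab
    rw [key a ha, key b hb, hab]
  -- the pseudo-periodic base
  apply hS
  refine ⟨fun p => muExt n ℓ S i (1 + (p + (n - i)) % gg), ?_, ?_⟩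
  · -- root bound
    have hper : IsPeriod n (fun p => muExt n ℓ S i (1 + (p + (n - i)) % gg)) gg := by
      refine ⟨hg1, fun j hj hjn => ?_⟩
      show muExt n ℓ S i (1 + (j + (n-i)) % gg) = muExt n ℓ S i (1 + (j + gg + (n-i)) % gg)
      congr 2
      rw [show j + gg + (n-i) = (j + (n-i)) + gg from by ring, Nat.add_mod_right]
    have hroot : root n (fun p => muExt n ℓ S i (1 + (p + (n - i)) % gg)) ≤ gg := by
      exact Nat.sInf_le ⟨hgn, hper⟩
    have h3γk : (0:ℝ) < 3*γ*k := by nlinarith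
    have hℓeq : (n:ℝ)/(3*γ*k) = (ℓ:ℝ) := by
      rw [hn, div_eq_iff (ne_of_gt h3γk)]; ring
    rw [hℓeq]
    calc (root n (fun p => muExt n ℓ S i (1 + (p + (n - i)) % gg)) : ℝ)
        ≤ (gg:ℝ) := by exact_mod_cast hroot
      _ ≤ (ℓ:ℝ) := by exact_mod_cast hgℓ
  · -- ham bound
    have hkey : ham n S (fun p => muExt n ℓ S i (1 + (p + (n - i)) % gg))
        ≤ hamIcc 1 n (frag n S i) (muExt n ℓ S i) := by
      unfold ham hamIcc
      apply Finset.card_le_card_of_injOn (fun p => (p + (n - i)) % n + 1)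
      · intro p hp
        simp only [Finset.mem_coe] at hp ⊢
        rw [Finset.mem_filter, Finset.mem_Icc] at hp
        obtain ⟨⟨hp1, hpn⟩, hpne⟩ := hp
        rw [Finset.mem_filter, Finset.mem_Icc]
        have hlt : (p + (n-i)) % n < n := Nat.mod_lt _ (by omega)
        refine ⟨⟨by omega, by omega⟩, ?_⟩
        have e1 : frag n S i ((p + (n-i)) % n + 1) = S p := by
          show cext n S (i + ((p + (n-i)) % n + 1) - 1) = S p
          rw [show i + ((p + (n-i)) % n + 1) - 1 = i + (p + (n-i)) % n from by omega]
          show S ((i + (p + (n-i)) % n - 1) % n + 1) = S p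
          congr 1
          rw [show i + (p + (n-i)) % n - 1 = (i - 1) + (p + (n-i)) % n from by omega,
            Nat.add_mod, Nat.mod_mod_of_dvd _ dvd_rfl, ← Nat.add_mod,
            show (i-1) + (p + (n-i)) = (p - 1) + n from by omega, Nat.add_mod_right,
            Nat.mod_eq_of_lt (by omega : p - 1 < n)]
          omega
        have e4 : muExt n ℓ S i ((p + (n-i)) % n + 1) = muExt n ℓ S i (1 + (p + (n - i)) % gg) := by
          apply Mg _ _ (by omega) (by omega)
          rw [show (p + (n-i)) % n + 1 - 1 = (p + (n-i)) % n from by omega,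
            show 1 + (p + (n-i)) % gg - 1 = (p + (n-i)) % gg from by omega,
            Nat.mod_mod_of_dvd _ hgn, Nat.mod_mod_of_dvd _ dvd_rfl]
        intro heq
        exact hpne (by rw [← e1, heq, e4])
      · intro p hp q hq hpq
        simp only [Finset.coe_filter, Set.mem_setOf_eq, Finset.mem_Icc] at hp hq
        have h1 : (p + (n-i)) % n = (q + (n-i)) % n := by
          have hpq' : (p + (n-i)) % n + 1 = (q + (n-i)) % n + 1 := hpq
          omega
        have h2 : p % n = q % n := Nat.ModEq.add_right_cancel' (n-i) h1
        have hmod : ∀ x : ℕ, 1 ≤ x → x ≤ n → (x % n = x ∨ (x = n ∧ x % n = 0)) := by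
          intro x h1x h2x
          rcases eq_or_lt_of_le h2x with rfl | hlt
          · right; exact ⟨rfl, Nat.mod_self x⟩
          · left; exact Nat.mod_eq_of_lt hlt
        rcases hmod p hp.1.1 hp.1.2 with h | h <;>
          rcases hmod q hq.1.1 hq.1.2 with h' | h' <;> omega
    have hc0 : (ham n S (fun p => muExt n ℓ S i (1 + (p + (n - i)) % gg)) : ℝ)
        ≤ (hamIcc 1 n (frag n S i) (muExt n ℓ S i) : ℝ) := by exact_mod_cast hkey
    refine hc0.trans ?_
    have hc : (3*(ℓ:ℝ)) * (hamIcc 1 n (frag n S i) (muExt n ℓ S i) : ℝ) ≤ (n:ℝ) := by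
      exact_mod_cast hA n
    rw [hn] at hc
    have hℓpos : (0:ℝ) < 3*(ℓ:ℝ) := by
      have : (1:ℝ) ≤ (ℓ:ℝ) := by exact_mod_cast hℓ1
      linarith
    have hc2 : (3*(ℓ:ℝ)) * (hamIcc 1 n (frag n S i) (muExt n ℓ S i) : ℝ)
        ≤ (3*(ℓ:ℝ)) * (γ*k) := by linarith [hc]
    exact le_of_mul_le_mul_left hc2 hℓpos

private lemma greedy (f : ℕ → ℕ) :
    ∀ N (P : Finset ℕ), P.card ≤ N → (∀ i ∈ P, 1 ≤ f i) →
    ∃ Δ : Finset ℕ, Δ ⊆ P ∧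
      (∀ i ∈ Δ, ∀ i' ∈ Δ, i ≠ i' →
        Disjoint (Finset.Icc i (i + f i - 1)) (Finset.Icc i' (i' + f i' - 1))) ∧
      P ⊆ Δ.biUnion (fun i => Finset.Icc i (i + f i - 1)) := by
  intro N
  induction N with
  | zero =>
    intro P hP _
    refine ⟨∅, by simp, by simp, ?_⟩
    have : P = ∅ := Finset.card_eq_zero.mp (Nat.le_zero.mp hP); simp [this]
  | succ N ih =>
    intro P hP hf
    rcases P.eq_empty_or_nonempty with rfl | hne
    · exact ⟨∅, by simp, by simp, by simp⟩
    set m := P.min' hne with hm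
    have hmP : m ∈ P := P.min'_mem hne
    set P' := P.filter (fun j => m + f m - 1 < j) with hP'
    have hP'sub : P' ⊆ P := Finset.filter_subset _ _
    have hmnot : m ∉ P' := by
      simp only [hP', Finset.mem_filter, not_and]
      intro _
      have := hf m hmP; omega
    have hcard : P'.card ≤ N := by
      have : P'.card < P.card := Finset.card_lt_card ⟨hP'sub, fun h => hmnot (h hmP)⟩
      omega
    obtain ⟨Δ', hΔ'sub, hdisj, hcov⟩ := ih P' hcard (fun i hi => hf i (hP'sub hi))
    refine ⟨insert m Δ', ?_, ?_, ?_⟩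
    · exact Finset.insert_subset hmP (hΔ'sub.trans hP'sub)
    · have key : ∀ j ∈ Δ', Disjoint (Finset.Icc m (m + f m - 1)) (Finset.Icc j (j + f j - 1)) := by
        intro j hj
        have hj' : m + f m - 1 < j := by
          have := hΔ'sub hj
          rw [hP', Finset.mem_filter] at this
          exact this.2
        rw [Finset.disjoint_left]
        intro x hx hx'
        rw [Finset.mem_Icc] at hx hx'
        omega
      intro a ha a' ha' hne'
      rcases Finset.mem_insert.mp ha with rfl | ha <;>
        rcases Finset.mem_insert.mp ha' with rfl | ha'
      · exact absurd rfl hne'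
      · exact key _ ha'
      · exact (key _ ha).symm
      · exact hdisj a ha a' ha' hne'
    · intro j hj
      by_cases hcase : m + f m - 1 < j
      · have hj' : j ∈ P' := by rw [hP', Finset.mem_filter]; exact ⟨hj, hcase⟩
        have := hcov hj'
        rw [Finset.mem_biUnion] at this ⊢
        obtain ⟨u, hu, hju⟩ := this
        exact ⟨u, Finset.mem_insert_of_mem hu, hju⟩
      · rw [Finset.mem_biUnion]
        refine ⟨m, Finset.mem_insert_self _ _, ?_⟩
        have h1 : m ≤ j := P.min'_le j hj
        have h2 := hf m hmP
        rw [Finset.mem_Icc]; omega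

/-- For every `S ∈ Σ^n \ H_{n,k}`, there exists `Δ ⊆ P(S)` with pairwise-disjoint
`R_{S,i}` covering `P(S)`; in particular `Σ_{i∈Δ} |R_{S,i}| ≥ |P(S)|`. -/
theorem stmt2 {α : Type*} (n k ℓ : ℕ) (γ : ℝ)
    (hk1 : 1 ≤ k) (hkn : k ≤ n) (hγ : 14 ≤ γ) (hℓ1 : 1 ≤ ℓ)
    (hn : (n : ℝ) = 3 * γ * k * ℓ)
    (S : ℕ → α) (hS : ¬ PseudoPeriodic n (3 * γ * k) (γ * k) S) :
    ∃ Δ : Finset ℕ, Δ ⊆ cubicSet n ℓ S ∧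
      (∀ i ∈ Δ, ∀ i' ∈ Δ, i ≠ i' → Disjoint (Rset n ℓ k γ S i) (Rset n ℓ k γ S i')) ∧
      cubicSet n ℓ S ⊆ Δ.biUnion (fun i => Rset n ℓ k γ S i) ∧
      (cubicSet n ℓ S).card ≤ ∑ i ∈ Δ, (Rset n ℓ k γ S i).card := by
  have htau : ∀ i ∈ cubicSet n ℓ S, 1 ≤ tau n ℓ k γ S i := by
    intro i hi
    have hne := tauSet_nonempty n k ℓ γ hk1 hkn hγ hℓ1 hn S hS hi
    have hmem : tau n ℓ k γ S i ∈ tauSet n ℓ k γ S i := Nat.sInf_mem hne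
    exact hmem.1
  obtain ⟨Δ, h1, h2, h3⟩ :=
    greedy (tau n ℓ k γ S) (cubicSet n ℓ S).card (cubicSet n ℓ S) le_rfl htau
  have hR : ∀ j, Rset n ℓ k γ S j = Finset.Icc j (j + tau n ℓ k γ S j - 1) := fun j => rfl
  refine ⟨Δ, h1, ?_, ?_, ?_⟩
  · intro a ha a' ha' hne
    rw [hR, hR]
    exact h2 a ha a' ha' hne
  · intro x hx
    have := h3 hx
    rw [Finset.mem_biUnion] at this ⊢
    obtain ⟨u, hu, hxu⟩ := this
    exact ⟨u, hu, by rw [hR]; exact hxu⟩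
  · calc (cubicSet n ℓ S).card
        ≤ (Δ.biUnion fun j => Rset n ℓ k γ S j).card := by
          apply Finset.card_le_card
          intro x hx
          have := h3 hx
          rw [Finset.mem_biUnion] at this ⊢
          obtain ⟨u, hu, hxu⟩ := this
          exact ⟨u, hu, by rw [hR]; exact hxu⟩
      _ ≤ ∑ j ∈ Δ, (Rset n ℓ k γ S j).card := Finset.card_biUnion_le
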